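/- There exists a symmetric positive definite solution S to the linear matrix inequality A^T S + S A - 2 C^T C < 0 if and only if the pair (A, C) is detectable. -/

import Mathlib

open Matrix Complex Finset

namespace LMIAux

noncomputable section

open scoped ComplexOrder

variable {k l : ℕ}

/-- squared norm of a complex vector -/
def nsq (v : Fin k → ℂ) : ℝ := ∑ i, Complex.normSq (v i)

lemma nsq_nonneg (v : Fin k → ℂ) : 0 ≤ nsq v :=
  Finset.sum_nonneg fun _ _ => Complex.normSq_nonneg _

lemma nsq_pos {v : Fin k → ℂ} (hv : v ≠ 0) : 0 < nsq v := by
  obtain ⟨i, hi⟩ : ∃ i, v i ≠ 0 := by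
    by_contra h; push_neg at h; exact hv (funext h)
  exact Finset.sum_pos' (fun i _ => Complex.normSq_nonneg _)
    ⟨i, Finset.mem_univ i, Complex.normSq_pos.2 hi⟩

lemma star_dot_self (w : Fin k → ℂ) : star w ⬝ᵥ w = (nsq w : ℂ) := by
  simp only [dotProduct, Pi.star_apply, nsq, Complex.ofReal_sum]
  exact Finset.sum_congr rfl fun i _ => by
    rw [Complex.star_def, ← Complex.normSq_eq_conj_mul_self]

/-- Cauchy–Schwarz for complex dot products, in squared form. -/
lemma csC (b w : Fin k → ℂ) : Complex.normSq (b ⬝ᵥ w) ≤ nsq b * nsq w := by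
  have h1 : ‖b ⬝ᵥ w‖ ≤ ∑ i, ‖b i‖ * ‖w i‖ := by
    refine le_trans (norm_sum_le _ _) (le_of_eq ?_)
    exact Finset.sum_congr rfl fun i _ => norm_mul _ _
  have h2 : (∑ i, ‖b i‖ * ‖w i‖) ^ 2 ≤ nsq b * nsq w := by
    refine le_trans (Finset.sum_mul_sq_le_sq_mul_sq _ _ _) (le_of_eq ?_)
    simp [nsq, Complex.sq_norm]
  calc Complex.normSq (b ⬝ᵥ w) = ‖b ⬝ᵥ w‖ ^ 2 := (Complex.sq_norm _).symm
    _ ≤ (∑ i, ‖b i‖ * ‖w i‖) ^ 2 := by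
        refine pow_le_pow_left₀ (norm_nonneg _) h1 2
    _ ≤ nsq b * nsq w := h2

lemma normbdC (A : Matrix (Fin k) (Fin l) ℂ) (v : Fin l → ℂ) :
    nsq (A *ᵥ v) ≤ (∑ i, nsq (A i)) * nsq v := by
  have : ∀ i, Complex.normSq ((A *ᵥ v) i) ≤ nsq (A i) * nsq v := fun i => csC (A i) v
  calc nsq (A *ᵥ v) = ∑ i, Complex.normSq ((A *ᵥ v) i) := rfl
    _ ≤ ∑ i, nsq (A i) * nsq v := Finset.sum_le_sum fun i _ => this i
    _ = (∑ i, nsq (A i)) * nsq v := by rw [Finset.sum_mul]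

/-- Hermitian form conjugate symmetry. -/
lemma quad_conj {P : Matrix (Fin k) (Fin k) ℂ} (hP : P.IsHermitian) (x y : Fin k → ℂ) :
    star x ⬝ᵥ P *ᵥ y = starRingEnd ℂ (star y ⬝ᵥ P *ᵥ x) := by
  have : star (star y ⬝ᵥ P *ᵥ x) = star (P *ᵥ x) ⬝ᵥ y := by
    rw [star_dotProduct]; simp
  rw [show (starRingEnd ℂ) (star y ⬝ᵥ P *ᵥ x) = star (star y ⬝ᵥ P *ᵥ x) from rfl, this,
    star_mulVec, hP.eq, ← dotProduct_mulVec]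

lemma quad_im_zero {H : Matrix (Fin k) (Fin k) ℂ} (hH : H.IsHermitian) (u : Fin k → ℂ) :
    (star u ⬝ᵥ H *ᵥ u).im = 0 := by
  have := quad_conj hH u u
  have h2 := congrArg Complex.im this
  simp only [Complex.conj_im] at h2
  linarith

lemma posdef_of_herm {H : Matrix (Fin k) (Fin k) ℂ} (hH : H.IsHermitian)
    (h : ∀ u : Fin k → ℂ, u ≠ 0 → 0 < (star u ⬝ᵥ H *ᵥ u).re) : H.PosDef := by
  refine Matrix.PosDef.of_dotProduct_mulVec_pos hH (fun u hu => ?_)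
  rw [Complex.pos_iff]
  exact ⟨h u hu, (quad_im_zero hH u).symm⟩

lemma herm_quad_re {P : Matrix (Fin k) (Fin k) ℂ} (hP : P.IsHermitian)
    (N : Matrix (Fin k) (Fin k) ℂ) (u : Fin k → ℂ) :
    (star u ⬝ᵥ (Nᴴ * P + P * N) *ᵥ u).re = 2 * (star u ⬝ᵥ P *ᵥ (N *ᵥ u)).re := by
  rw [add_mulVec, dotProduct_add]
  have h1 : star u ⬝ᵥ (Nᴴ * P) *ᵥ u = star (N *ᵥ u) ⬝ᵥ P *ᵥ u := by
    rw [← mulVec_mulVec, dotProduct_mulVec, ← star_mulVec]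
  have h2 : star (N *ᵥ u) ⬝ᵥ P *ᵥ u = starRingEnd ℂ (star u ⬝ᵥ P *ᵥ (N *ᵥ u)) := by
    simpa using quad_conj hP (N *ᵥ u) u
  rw [h1, h2, ← mulVec_mulVec]
  simp only [Complex.add_re, Complex.conj_re]
  ring

open scoped MatrixOrder Matrix.Norms.L2Operator in
lemma coercive {B : Matrix (Fin k) (Fin k) ℂ} (hB : B.PosDef) :
    ∃ c : ℝ, 0 < c ∧ ∀ v : Fin k → ℂ, c * nsq v ≤ (star v ⬝ᵥ B *ᵥ v).re := by
  classical
  have hLpsd : (CFC.sqrt B).PosSemidef := (CFC.sqrt_nonneg B).posSemidef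
  set L := CFC.sqrt B with hL
  have hLL : L * L = B := CFC.sqrt_mul_sqrt_self B hB.posSemidef.nonneg
  clear_value L
  have hdetL : IsUnit L.det := by
    have hdB : B.det ≠ 0 := hB.det_pos.ne'
    have : L.det * L.det = B.det := by rw [← det_mul, hLL]
    exact isUnit_iff_ne_zero.2 fun h => hdB (by rw [← this, h, mul_zero])
  obtain ⟨K, hK0, hKb⟩ : ∃ K : ℝ, 0 ≤ K ∧ ∀ w, nsq (L⁻¹ *ᵥ w) ≤ K * nsq w :=
    ⟨∑ i, nsq ((L⁻¹) i), Finset.sum_nonneg fun i _ => nsq_nonneg _, fun w => normbdC _ _⟩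
  refine ⟨(K + 1)⁻¹, inv_pos.2 (by linarith), fun v => ?_⟩
  have hsv : star v ᵥ* L = star (L *ᵥ v) := by rw [star_mulVec, hLpsd.isHermitian.eq]
  have hquad : star v ⬝ᵥ B *ᵥ v = (nsq (L *ᵥ v) : ℂ) := by
    rw [← hLL, ← mulVec_mulVec, dotProduct_mulVec, hsv, star_dot_self]
  have hre : (star v ⬝ᵥ B *ᵥ v).re = nsq (L *ᵥ v) := by rw [hquad]; simp
  have hv : v = L⁻¹ *ᵥ (L *ᵥ v) := by
    rw [mulVec_mulVec, Matrix.nonsing_inv_mul _ hdetL, one_mulVec]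
  have hb : nsq v ≤ K * nsq (L *ᵥ v) := by
    calc nsq v = nsq (L⁻¹ *ᵥ (L *ᵥ v)) := by rw [← hv]
      _ ≤ K * nsq (L *ᵥ v) := hKb _
  rw [hre]
  have hw0 : 0 ≤ nsq (L *ᵥ v) := nsq_nonneg _
  rw [inv_mul_le_iff₀ (by linarith)]
  nlinarith

lemma conj_posdef {E B : Matrix (Fin k) (Fin k) ℂ} (hE : IsUnit E.det) (hB : B.PosDef) :
    (Eᴴ * B * E).PosDef := by
  classical
  refine Matrix.PosDef.of_dotProduct_mulVec_pos (Matrix.isHermitian_conjTranspose_mul_mul E hB.isHermitian) (fun x hx => ?_)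
  have hinj : Function.Injective (E.mulVec) := mulVec_injective_iff_isUnit.mpr ((isUnit_iff_isUnit_det _).2 hE)
  have hEx : E *ᵥ x ≠ 0 := fun h => hx (hinj (by simpa using h))
  have := hB.dotProduct_mulVec_pos hEx
  simpa only [star_mulVec, ← dotProduct_mulVec, mulVec_mulVec, Matrix.mul_assoc,
    vecMul_vecMul] using this

lemma arith1 {s r lam β x tabs W R A2 μre : ℝ} (hs0 : 0 < s) (hr0 : 0 < r)
    (hlam : 0 < lam) (hβ0 : 0 ≤ β) (hx0 : 0 ≤ x) (htabs0 : 0 ≤ tabs) (hW0 : 0 ≤ W)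
    (htabs2 : tabs^2 ≤ β*W) (hA2b : 2*A2 ≤ -(lam*W)) (hR : R ≤ x*tabs)
    (hμre : μre = -r) (hseq : s*(2*β+1) = r*lam) (hor : 0 < x ∨ 0 < W) :
    0 < -(2 * ((s * (μre * x^2) + s * R) + A2)) := by
  subst hμre
  have h4 : 2*s*r*(x*tabs) ≤ s*(r*x)^2 + s*tabs^2 := by
    nlinarith [mul_nonneg hs0.le (sq_nonneg (r*x - tabs))]
  have h5 : s*tabs^2 ≤ s*(β*W) := mul_le_mul_of_nonneg_left htabs2 hs0.le
  have h6 : 2*(s*β) = r*lam - s := by rw [← hseq]; ring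
  rcases hor with hx | hW
  · nlinarith [mul_pos hs0 (mul_pos hx hx), mul_pos hr0 (mul_pos hs0 (mul_pos hx hx)),
      mul_pos (mul_pos hr0 hr0) (mul_pos hs0 (mul_pos hx hx)),
      mul_nonneg hs0.le hW0, mul_nonneg hlam.le hW0, mul_nonneg (mul_nonneg hr0.le hlam.le) hW0,
      mul_le_mul_of_nonneg_left hR (by positivity : (0:ℝ) ≤ 2*s*r)]
  · nlinarith [mul_pos hlam hW, mul_pos hr0 (mul_pos hlam hW), mul_pos hs0 hW,
      mul_nonneg (mul_nonneg hs0.le hr0.le) (mul_nonneg hr0.le (sq_nonneg x)),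
      mul_le_mul_of_nonneg_left hR (by positivity : (0:ℝ) ≤ 2*s*r)]

lemma key : ∀ (k : ℕ) (M : Matrix (Fin k) (Fin k) ℂ),
    (∀ (μ : ℂ) (v : Fin k → ℂ), v ≠ 0 → M *ᵥ v = μ • v → μ.re < 0) →
    ∃ P : Matrix (Fin k) (Fin k) ℂ, P.PosDef ∧ (-(Mᴴ * P + P * M)).PosDef := by
  intro k
  induction k with
  | zero =>
    intro M _
    refine ⟨1, Matrix.PosDef.one, Matrix.PosDef.of_dotProduct_mulVec_pos ?_ ?_⟩
    · ext i _; exact i.elim0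
    · intro v hv; exact absurd (funext fun i : Fin 0 => i.elim0) hv
  | succ k ih =>
    intro M hM
    classical
    obtain ⟨μ₀, hμ₀⟩ := Module.End.exists_eigenvalue (Matrix.mulVecLin M)
    obtain ⟨v₀, hv₀⟩ := hμ₀.exists_hasEigenvector
    have hMv₀ : M *ᵥ v₀ = μ₀ • v₀ := by
      simpa [Matrix.mulVecLin_apply] using hv₀.apply_eq_smul
    have hrμ : μ₀.re < 0 := hM μ₀ v₀ hv₀.right hMv₀
    obtain ⟨j, hj⟩ : ∃ j, v₀ j ≠ 0 := by
      by_contra h; push_neg at h; exact hv₀.right (funext h)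
    set E : Matrix (Fin (k+1)) (Fin (k+1)) ℂ :=
      (1 : Matrix (Fin (k+1)) (Fin (k+1)) ℂ).updateCol j v₀ with hE
    have hdetE : IsUnit E.det := by
      have h1 : E.det = Matrix.cramer (1 : Matrix (Fin (k+1)) (Fin (k+1)) ℂ) v₀ j :=
        (Matrix.cramer_apply _ _ _).symm
      rw [h1, Matrix.cramer_one]
      exact hj.isUnit
    have hinj : Function.Injective (E.mulVec) :=
      mulVec_injective_iff_isUnit.mpr ((isUnit_iff_isUnit_det _).2 hdetE)
    have hEsj : E *ᵥ Pi.single j 1 = v₀ := by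
      funext i
      simp [hE, Matrix.mulVec_single, Matrix.updateCol_apply]
    set N : Matrix (Fin (k+1)) (Fin (k+1)) ℂ := E⁻¹ * M * E with hN
    have hME : M * E = E * N := by
      rw [hN, ← Matrix.mul_assoc, ← Matrix.mul_assoc, Matrix.mul_nonsing_inv _ hdetE,
        Matrix.one_mul]
    have hNsj : N *ᵥ Pi.single j 1 = μ₀ • (Pi.single j 1 : Fin (k+1) → ℂ) := by
      have h1 : N *ᵥ Pi.single j 1 = E⁻¹ *ᵥ (M *ᵥ v₀) := by
        rw [← hEsj, mulVec_mulVec, mulVec_mulVec, hN, Matrix.mul_assoc]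
      have h2 : E⁻¹ *ᵥ v₀ = Pi.single j 1 := by
        rw [← hEsj, mulVec_mulVec, Matrix.nonsing_inv_mul _ hdetE, one_mulVec]
      rw [h1, hMv₀, mulVec_smul, h2]
    have hcol : ∀ i, N i j = if i = j then μ₀ else 0 := by
      intro i
      have h1 := congrFun hNsj i
      simp only [Matrix.mulVec_single, mul_one, Pi.smul_apply, Pi.single_apply, smul_eq_mul,
        mul_ite, mul_one, mul_zero, Matrix.col_apply, MulOpposite.op_one, one_smul] at h1
      exact h1
    have hNjj : N j j = μ₀ := by rw [hcol]; simp
    have hN0 : ∀ a : Fin k, N (j.succAbove a) j = 0 := by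
      intro a; rw [hcol]; simp [Fin.succAbove_ne]
    set M' : Matrix (Fin k) (Fin k) ℂ := N.submatrix j.succAbove j.succAbove with hM'
    set b' : Fin k → ℂ := fun a => N j (j.succAbove a) with hb'
    -- row decomposition of N *ᵥ u
    have hNrow_j : ∀ u : Fin (k+1) → ℂ,
        (N *ᵥ u) j = μ₀ * u j + b' ⬝ᵥ (u ∘ j.succAbove) := by
      intro u
      rw [Matrix.mulVec, dotProduct, Fin.sum_univ_succAbove _ j, hNjj]
      rfl
    have hNrow_s : ∀ (u : Fin (k+1) → ℂ) (a : Fin k),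
        (N *ᵥ u) (j.succAbove a) = (M' *ᵥ (u ∘ j.succAbove)) a := by
      intro u a
      rw [Matrix.mulVec, dotProduct, Fin.sum_univ_succAbove _ j, hN0 a, zero_mul, zero_add]
      rfl
    -- the submatrix inherits the spectral condition
    have hsub : ∀ (ν : ℂ) (w : Fin k → ℂ), w ≠ 0 → M' *ᵥ w = ν • w → ν.re < 0 := by
      intro ν w hw hvw
      by_cases hνμ : ν = μ₀
      · rw [hνμ]; exact hrμ
      set c : ℂ := (b' ⬝ᵥ w) / (ν - μ₀) with hc
      set u : Fin (k+1) → ℂ := j.insertNth c w with hu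
      have huj : u j = c := by rw [hu]; simp
      have husa : ∀ a, u (j.succAbove a) = w a := by
        intro a; rw [hu]; simp
      have husa' : u ∘ j.succAbove = w := funext husa
      have hNu : N *ᵥ u = ν • u := by
        funext i
        rcases eq_or_ne i j with rfl | hij
        · rw [hNrow_j u, husa', huj, Pi.smul_apply, huj, smul_eq_mul]
          have hd : ν - μ₀ ≠ 0 := sub_ne_zero.2 hνμ
          rw [hc]
          field_simp
          ring
        · obtain ⟨a, ha⟩ := Fin.exists_succAbove_eq hij
          rw [← ha, hNrow_s u a, husa', hvw, Pi.smul_apply, Pi.smul_apply, husa a]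
      have hu0 : u ≠ 0 := by
        intro h
        apply hw
        funext a
        rw [← husa a, h]; rfl
      have hEu0 : E *ᵥ u ≠ 0 := by
        intro h
        apply hu0
        apply hinj
        rw [h, Matrix.mulVec_zero]
      have hMEu : M *ᵥ (E *ᵥ u) = ν • (E *ᵥ u) := by
        rw [mulVec_mulVec, hME, ← mulVec_mulVec, hNu, mulVec_smul]
      exact hM ν (E *ᵥ u) hEu0 hMEu
    obtain ⟨P', hP'pd, hP'neg⟩ := ih M' hsub
    obtain ⟨lam, hlam, hco⟩ := coercive hP'neg
    set β : ℝ := nsq b' with hβ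
    have hβ0 : 0 ≤ β := nsq_nonneg _
    set r : ℝ := -μ₀.re with hr
    have hr0 : 0 < r := by simp [hr]; linarith
    set s : ℝ := r * lam / (2*β + 1) with hs
    have hs0 : 0 < s := by
      apply div_pos (mul_pos hr0 hlam); linarith
    -- the candidate P
    set P : Matrix (Fin (k+1)) (Fin (k+1)) ℂ :=
      Matrix.of (j.insertNth (j.insertNth ((s : ℂ)) 0)
        (fun a => j.insertNth 0 (fun b => P' a b))) with hP
    have hPjj : P j j = (s : ℂ) := by
      simp [hP, Fin.insertNth_apply_same]
    have hPjs : ∀ b, P j (j.succAbove b) = 0 := by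
      intro b
      simp [hP, Fin.insertNth_apply_same, Fin.insertNth_apply_succAbove,
        Pi.single_eq_of_ne (Fin.succAbove_ne j b)]
    have hPsj : ∀ a, P (j.succAbove a) j = 0 := by
      intro a
      simp [hP, Fin.insertNth_apply_same, Fin.insertNth_apply_succAbove]
    have hPss : ∀ a b, P (j.succAbove a) (j.succAbove b) = P' a b := by
      intro a b
      simp [hP, Fin.insertNth_apply_succAbove]
    -- quadratic form of P
    have hPmul : ∀ z : Fin (k+1) → ℂ,
        (P *ᵥ z) j = (s : ℂ) * z j ∧
        ∀ a, (P *ᵥ z) (j.succAbove a) = (P' *ᵥ (z ∘ j.succAbove)) a := by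
      intro z
      constructor
      · rw [Matrix.mulVec, dotProduct, Fin.sum_univ_succAbove _ j, hPjj]
        simp only [hPjs, zero_mul, Finset.sum_const_zero, add_zero]
      · intro a
        rw [Matrix.mulVec, dotProduct, Fin.sum_univ_succAbove _ j, hPsj, zero_mul, zero_add]
        simp only [hPss]
        rfl
    have hquad : ∀ u z : Fin (k+1) → ℂ,
        star u ⬝ᵥ P *ᵥ z =
          (starRingEnd ℂ) (u j) * ((s:ℂ) * z j)
            + star (u ∘ j.succAbove) ⬝ᵥ P' *ᵥ (z ∘ j.succAbove) := by
      intro u z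
      rw [dotProduct, Fin.sum_univ_succAbove _ j, (hPmul z).1]
      congr 1
      rw [dotProduct]
      refine Finset.sum_congr rfl fun a _ => ?_
      rw [(hPmul z).2 a]
      rfl
    have hPherm : P.IsHermitian := by
      ext i i'
      rw [Matrix.conjTranspose_apply]
      by_cases hij : i = j
      · by_cases hi'j : i' = j
        · rw [hij, hi'j, hPjj]; simp [Complex.conj_ofReal]
        · obtain ⟨b, hb⟩ := Fin.exists_succAbove_eq hi'j
          rw [hij, ← hb, hPsj, hPjs]; simp
      · obtain ⟨a, ha⟩ := Fin.exists_succAbove_eq hij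
        by_cases hi'j : i' = j
        · rw [hi'j, ← ha, hPjs, hPsj]; simp
        · obtain ⟨b, hb⟩ := Fin.exists_succAbove_eq hi'j
          rw [← ha, ← hb, hPss, hPss]
          have := congrFun (congrFun hP'pd.isHermitian.eq a) b
          rw [Matrix.conjTranspose_apply] at this
          exact this
    -- positivity of P
    have hPpos : P.PosDef := by
      refine posdef_of_herm hPherm (fun u hu => ?_)
      rw [hquad u u]
      have hterm1 : ((starRingEnd ℂ) (u j) * ((s:ℂ) * u j)).re
          = s * Complex.normSq (u j) := by
        have : (starRingEnd ℂ) (u j) * ((s:ℂ) * u j)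
            = (s:ℂ) * ((starRingEnd ℂ) (u j) * u j) := by ring
        rw [this, ← Complex.normSq_eq_conj_mul_self, ← Complex.ofReal_mul, Complex.ofReal_re]
      rw [Complex.add_re, hterm1]
      by_cases hw : u ∘ j.succAbove = 0
      · have hc0 : u j ≠ 0 := by
          intro hc
          apply hu
          funext i
          rcases eq_or_ne i j with rfl | hij
          · exact hc
          · obtain ⟨a, ha⟩ := Fin.exists_succAbove_eq hij
            rw [← ha, ← Function.comp_apply (f := u), hw]; rfl
        have h2 : 0 ≤ (star (u ∘ j.succAbove) ⬝ᵥ P' *ᵥ (u ∘ j.succAbove)).re := by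
          have := hP'pd.posSemidef.dotProduct_mulVec_nonneg (u ∘ j.succAbove)
          rw [Complex.le_def] at this
          exact this.1
        have : 0 < s * Complex.normSq (u j) :=
          mul_pos hs0 (Complex.normSq_pos.2 hc0)
        linarith
      · have h2 : 0 < (star (u ∘ j.succAbove) ⬝ᵥ P' *ᵥ (u ∘ j.succAbove)).re := by
          have := hP'pd.dotProduct_mulVec_pos hw
          rw [Complex.pos_iff] at this
          exact this.1
        have : 0 ≤ s * Complex.normSq (u j) :=
          mul_nonneg hs0.le (Complex.normSq_nonneg _)
        linarith
    -- negative definiteness for N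
    have hNPherm : (-(Nᴴ * P + P * N)).IsHermitian := by
      have h0 : (Nᴴ * P + P * N).IsHermitian := by
        show (Nᴴ * P + P * N)ᴴ = _
        simp only [conjTranspose_add, conjTranspose_mul, conjTranspose_conjTranspose, hPherm.eq]
        exact add_comm _ _
      exact h0.neg
    have hNP : (-(Nᴴ * P + P * N)).PosDef := by
      refine posdef_of_herm hNPherm (fun u hu => ?_)
      have hre : (star u ⬝ᵥ (-(Nᴴ * P + P * N)) *ᵥ u).re
          = -(star u ⬝ᵥ (Nᴴ * P + P * N) *ᵥ u).re := by
        rw [Matrix.neg_mulVec, dotProduct_neg, Complex.neg_re]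
      rw [hre, herm_quad_re hPherm N u]
      set c : ℂ := u j with hcdef
      set w : Fin k → ℂ := u ∘ j.succAbove with hwdef
      set t : ℂ := b' ⬝ᵥ w with htdef
      have hq := hquad u (N *ᵥ u)
      have hNj : (N *ᵥ u) j = μ₀ * c + t := hNrow_j u
      have hNs : (N *ᵥ u) ∘ j.succAbove = M' *ᵥ w := funext (hNrow_s u)
      rw [hNj, hNs] at hq
      rw [hq, Complex.add_re]
      set x : ℝ := ‖c‖ with hxdef
      set tabs : ℝ := ‖t‖ with htabsdef
      set W : ℝ := nsq w with hWdef
      set A2 : ℝ := (star w ⬝ᵥ P' *ᵥ (M' *ᵥ w)).re with hA2def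
      have hx0 : 0 ≤ x := norm_nonneg _
      have htabs0 : 0 ≤ tabs := norm_nonneg _
      have hW0 : 0 ≤ W := nsq_nonneg _
      have htabs2 : tabs^2 ≤ β * W := by
        rw [htabsdef, Complex.sq_norm]
        exact csC b' w
      have hA2b : 2 * A2 ≤ -(lam * W) := by
        have hc2 := hco w
        have heq : (star w ⬝ᵥ (-(M'ᴴ * P' + P' * M')) *ᵥ w).re = -(2 * A2) := by
          rw [Matrix.neg_mulVec, dotProduct_neg, Complex.neg_re,
            herm_quad_re hP'pd.isHermitian M' w]
        rw [heq] at hc2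
        linarith
      have hA1 : ((starRingEnd ℂ) c * ((s:ℂ) * (μ₀ * c + t))).re
          = s * (μ₀.re * x^2) + s * ((starRingEnd ℂ) c * t).re := by
        have e : (starRingEnd ℂ) c * ((s:ℂ) * (μ₀ * c + t))
            = (s:ℂ) * (μ₀ * ((Complex.normSq c : ℝ) : ℂ)) + (s:ℂ) * ((starRingEnd ℂ) c * t) := by
          rw [Complex.normSq_eq_conj_mul_self]
          ring
        rw [e, Complex.add_re, Complex.re_ofReal_mul, Complex.re_ofReal_mul]
        congr 2
        rw [Complex.mul_re]
        simp [hxdef, Complex.sq_norm]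
      have hR : ((starRingEnd ℂ) c * t).re ≤ x * tabs := by
        refine (Complex.re_le_norm _).trans ?_
        rw [norm_mul]
        simp [hxdef, htabsdef]
      have hμre : μ₀.re = -r := by rw [hr]; ring
      have hseq : s * (2*β+1) = r * lam := by
        rw [hs]; field_simp
      have hor : 0 < x ∨ 0 < W := by
        by_cases hc0 : c = 0
        · right
          have hw0 : w ≠ 0 := by
            intro hww
            apply hu
            funext i
            by_cases hij : i = j
            · rw [hij]; exact hc0
            · obtain ⟨a, ha⟩ := Fin.exists_succAbove_eq hij
              rw [← ha]
              have := congrFun hww a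
              exact this
          exact nsq_pos hw0
        · left
          rw [hxdef]
          exact norm_pos_iff.mpr hc0
      rw [hA1]
      exact arith1 hs0 hr0 hlam hβ0 hx0 htabs0 hW0 htabs2 hA2b hR hμre hseq hor
    -- transfer along E
    have hMEN : M = E * N * E⁻¹ := by
      rw [← hME, Matrix.mul_nonsing_inv_cancel_right _ _ hdetE]
    have hEE : Eᴴ * (E⁻¹)ᴴ = 1 := by
      rw [← conjTranspose_mul, Matrix.nonsing_inv_mul _ hdetE, conjTranspose_one]
    have hE'E : E⁻¹ * E = 1 := Matrix.nonsing_inv_mul _ hdetE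
    have h1 : Mᴴ * ((E⁻¹)ᴴ * P * E⁻¹) = (E⁻¹)ᴴ * (Nᴴ * P) * E⁻¹ := by
      rw [hMEN]
      simp only [conjTranspose_mul, Matrix.mul_assoc]
      rw [← Matrix.mul_assoc Eᴴ, hEE, Matrix.one_mul]
    have h2 : ((E⁻¹)ᴴ * P * E⁻¹) * M = (E⁻¹)ᴴ * (P * N) * E⁻¹ := by
      rw [hMEN]
      simp only [Matrix.mul_assoc]
      rw [← Matrix.mul_assoc E⁻¹ E, hE'E, Matrix.one_mul]
    have hid : -(Mᴴ * ((E⁻¹)ᴴ * P * E⁻¹) + ((E⁻¹)ᴴ * P * E⁻¹) * M)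
        = (E⁻¹)ᴴ * (-(Nᴴ * P + P * N)) * E⁻¹ := by
      rw [h1, h2, ← Matrix.add_mul, ← Matrix.mul_add]
      simp [Matrix.neg_mul, Matrix.mul_neg, Matrix.mul_add, Matrix.add_mul, neg_add_rev]
    refine ⟨(E⁻¹)ᴴ * P * E⁻¹, ?_, ?_⟩
    · exact conj_posdef (E.isUnit_nonsing_inv_det hdetE) hPpos
    · rw [hid]
      exact conj_posdef (E.isUnit_nonsing_inv_det hdetE) hNP

/-! ### Real/complex bridge -/

def cv (x : Fin k → ℝ) : Fin k → ℂ := fun i => (x i : ℂ)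

lemma cv_eq (x : Fin k → ℝ) : cv x = ⇑Complex.ofRealHom ∘ x := rfl

lemma cv_ne_zero {x : Fin k → ℝ} (hx : x ≠ 0) : cv x ≠ 0 := by
  obtain ⟨i, hi⟩ : ∃ i, x i ≠ 0 := by
    by_contra h; push_neg at h; exact hx (funext h)
  intro h
  have := congrFun h i
  rw [show (0 : Fin k → ℂ) i = 0 from rfl,
    show cv x i = ((x i : ℝ) : ℂ) from rfl] at this
  exact hi (Complex.ofReal_eq_zero.mp this)

lemma star_cv (x : Fin k → ℝ) : star (cv x) = cv x := by
  funext i; simp [cv, Complex.conj_ofReal]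

lemma mulVec_cv (R : Matrix (Fin k) (Fin l) ℝ) (x : Fin l → ℝ) :
    (R.map Complex.ofReal) *ᵥ (cv x) = cv (R *ᵥ x) := by
  funext i
  rw [cv_eq, cv_eq, Function.comp_apply]
  exact (RingHom.map_mulVec Complex.ofRealHom R x i).symm

lemma dot_cv (x : Fin k → ℝ) (z : Fin k → ℝ) :
    cv x ⬝ᵥ cv z = ((x ⬝ᵥ z : ℝ) : ℂ) := by
  rw [cv_eq, cv_eq, ← RingHom.map_dotProduct]
  rfl

lemma quad_cv (R : Matrix (Fin k) (Fin k) ℝ) (x z : Fin k → ℝ) :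
    cv x ⬝ᵥ (R.map Complex.ofReal) *ᵥ (cv z) = ((x ⬝ᵥ R *ᵥ z : ℝ) : ℂ) := by
  rw [mulVec_cv, dot_cv]

lemma nsq_cv (x : Fin k → ℝ) : nsq (cv x) = x ⬝ᵥ x := by
  simp [nsq, cv, dotProduct, Complex.normSq_ofReal, sq]

lemma symm_entries {R : Matrix (Fin k) (Fin k) ℝ} (hR : R.IsHermitian) :
    ∀ a b, R a b = R b a := by
  intro a b
  have := congrFun (congrFun hR.eq a) b
  rw [Matrix.conjTranspose_apply, star_trivial] at this
  exact this.symm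

lemma quad_symm_swap {R : Matrix (Fin k) (Fin k) ℝ} (hR : R.IsHermitian) (x y : Fin k → ℝ) :
    x ⬝ᵥ R *ᵥ y = y ⬝ᵥ R *ᵥ x := by
  simp only [dotProduct, mulVec, Finset.mul_sum]
  rw [Finset.sum_comm]
  refine Finset.sum_congr rfl fun i _ => Finset.sum_congr rfl fun j _ => ?_
  rw [symm_entries hR j i]
  ring

lemma posdef_map {R : Matrix (Fin k) (Fin k) ℝ} (hR : R.PosDef) :
    (R.map Complex.ofReal).PosDef := by
  have hherm : (R.map Complex.ofReal).IsHermitian := by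
    ext i j
    rw [Matrix.conjTranspose_apply, Matrix.map_apply, Matrix.map_apply, Complex.star_def,
      Complex.conj_ofReal, symm_entries hR.isHermitian j i]
  refine posdef_of_herm hherm (fun v hv => ?_)
  set x : Fin k → ℝ := fun i => (v i).re with hx
  set y : Fin k → ℝ := fun i => (v i).im with hy
  have hv' : v = cv x + Complex.I • cv y := by
    funext i
    simp only [Pi.add_apply, Pi.smul_apply, smul_eq_mul, cv, hx, hy]
    rw [mul_comm]
    exact (Complex.re_add_im (v i)).symm
  have hsv : star v = cv x - Complex.I • cv y := by
    funext i
    simp only [Pi.sub_apply, Pi.smul_apply, Pi.star_apply, smul_eq_mul, cv, hx, hy,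
      Complex.star_def]
    apply Complex.ext <;> simp
  have hq : star v ⬝ᵥ (R.map Complex.ofReal) *ᵥ v
      = ((x ⬝ᵥ R *ᵥ x + y ⬝ᵥ R *ᵥ y : ℝ) : ℂ) := by
    rw [hsv]
    conv_lhs => rw [hv']
    rw [mulVec_add, mulVec_smul, sub_dotProduct, dotProduct_add, dotProduct_add,
      smul_dotProduct, smul_dotProduct, dotProduct_smul, dotProduct_smul]
    rw [quad_cv, quad_cv, quad_cv, quad_cv]
    have hxyC : ((x ⬝ᵥ R *ᵥ y : ℝ) : ℂ) = ((y ⬝ᵥ R *ᵥ x : ℝ) : ℂ) :=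
      congrArg Complex.ofReal (quad_symm_swap hR.isHermitian x y)
    have hI : Complex.I * Complex.I = -1 := Complex.I_mul_I
    push_cast
    simp only [smul_eq_mul]
    linear_combination Complex.I * hxyC - ((y ⬝ᵥ R *ᵥ y : ℝ) : ℂ) * hI
  rw [hq, Complex.ofReal_re]
  have hxy0 : x ≠ 0 ∨ y ≠ 0 := by
    by_contra h
    push_neg at h
    apply hv
    funext i
    have h1 : x i = 0 := by rw [h.1]; rfl
    have h2 : y i = 0 := by rw [h.2]; rfl
    exact Complex.ext h1 h2
  have hx' : 0 ≤ x ⬝ᵥ R *ᵥ x := by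
    have := hR.posSemidef.dotProduct_mulVec_nonneg x
    rwa [show star x = x from funext fun i => star_trivial _] at this
  have hy' : 0 ≤ y ⬝ᵥ R *ᵥ y := by
    have := hR.posSemidef.dotProduct_mulVec_nonneg y
    rwa [show star y = y from funext fun i => star_trivial _] at this
  rcases hxy0 with h | h
  · have := hR.dotProduct_mulVec_pos h
    rw [show star x = x from funext fun i => star_trivial _] at this
    linarith
  · have := hR.dotProduct_mulVec_pos h
    rw [show star y = y from funext fun i => star_trivial _] at this
    linarith

lemma posdef_real_of {B : Matrix (Fin k) (Fin k) ℝ} (hsymm : Bᵀ = B)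
    (hpos : ∀ x : Fin k → ℝ, x ≠ 0 → 0 < x ⬝ᵥ B *ᵥ x) : B.PosDef := by
  refine Matrix.PosDef.of_dotProduct_mulVec_pos ?_ ?_
  · ext i j
    rw [Matrix.conjTranspose_apply, star_trivial]
    exact congrFun (congrFun hsymm i) j
  · intro x hx
    rw [show star x = x from funext fun i => star_trivial _]
    exact hpos x hx

lemma posdef_real_quad {B : Matrix (Fin k) (Fin k) ℝ} (hB : B.PosDef) :
    ∀ x : Fin k → ℝ, x ≠ 0 → 0 < x ⬝ᵥ B *ᵥ x := by
  intro x hx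
  have := hB.dotProduct_mulVec_pos hx
  rwa [show star x = x from funext fun i => star_trivial _] at this

lemma re_posdef {Q : Matrix (Fin k) (Fin k) ℂ} (hQ : Q.PosDef) :
    (Matrix.of fun i j => (Q i j).re : Matrix (Fin k) (Fin k) ℝ).PosDef := by
  refine posdef_real_of ?_ ?_
  · ext i j
    have := congrFun (congrFun hQ.isHermitian.eq i) j
    rw [Matrix.conjTranspose_apply] at this
    have h2 := congrArg Complex.re this
    rw [Complex.star_def, Complex.conj_re] at h2
    simpa using h2
  · intro x hx
    have hkey : x ⬝ᵥ (Matrix.of fun i j => (Q i j).re : Matrix (Fin k) (Fin k) ℝ) *ᵥ x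
        = (star (cv x) ⬝ᵥ Q *ᵥ (cv x)).re := by
      rw [star_cv]
      simp only [dotProduct, mulVec, Matrix.of_apply, cv, Complex.re_sum, Finset.mul_sum]
      refine Finset.sum_congr rfl fun i _ => Finset.sum_congr rfl fun j _ => ?_
      simp [Complex.mul_re]
    rw [hkey]
    have := hQ.dotProduct_mulVec_pos (cv_ne_zero hx)
    rw [Complex.pos_iff] at this
    exact this.1

lemma coercive_real {B : Matrix (Fin k) (Fin k) ℝ} (hB : B.PosDef) :
    ∃ c : ℝ, 0 < c ∧ ∀ x : Fin k → ℝ, c * (x ⬝ᵥ x) ≤ x ⬝ᵥ B *ᵥ x := by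
  obtain ⟨c, hc, hcb⟩ := coercive (posdef_map hB)
  refine ⟨c, hc, fun x => ?_⟩
  have h1 := hcb (cv x)
  rw [star_cv, quad_cv, nsq_cv, Complex.ofReal_re] at h1
  exact h1

lemma normbd_real (B : Matrix (Fin l) (Fin k) ℝ) :
    ∃ K : ℝ, 0 ≤ K ∧ ∀ x, (B *ᵥ x) ⬝ᵥ (B *ᵥ x) ≤ K * (x ⬝ᵥ x) := by
  refine ⟨∑ i, nsq (cv (B i)), Finset.sum_nonneg fun i _ => nsq_nonneg _, fun x => ?_⟩
  have h1 := normbdC (B.map Complex.ofReal) (cv x)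
  rw [mulVec_cv, nsq_cv, nsq_cv] at h1
  have h2 : ∀ i, (B.map Complex.ofReal) i = cv (B i) := by
    intro i; funext j; rfl
  simp only [h2] at h1
  exact h1

lemma cs_real (u : Fin k → ℝ) (z : Fin k → ℝ) : (u ⬝ᵥ z)^2 ≤ (u ⬝ᵥ u) * (z ⬝ᵥ z) := by
  have := csC (cv u) (cv z)
  rw [dot_cv, Complex.normSq_ofReal, nsq_cv, nsq_cv] at this
  rw [sq]
  exact this

lemma key_real (M : Matrix (Fin k) (Fin k) ℝ)
    (hM : ∀ μ : ℂ, (∃ v : Fin k → ℂ, v ≠ 0 ∧ (M.map Complex.ofReal) *ᵥ v = μ • v) → μ.re < 0) :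
    ∃ P : Matrix (Fin k) (Fin k) ℝ, P.PosDef ∧ (-(Mᵀ * P + P * M)).PosDef := by
  obtain ⟨P₀, hP₀, hneg⟩ := key k (M.map Complex.ofReal) (fun μ v hv hMv => hM μ ⟨v, hv, hMv⟩)
  refine ⟨Matrix.of fun i j => (P₀ i j).re, re_posdef hP₀, ?_⟩
  have hmat : -(Mᵀ * (Matrix.of fun i j => (P₀ i j).re) + (Matrix.of fun i j => (P₀ i j).re) * M)
      = Matrix.of fun i j =>
        ((-((M.map Complex.ofReal)ᴴ * P₀ + P₀ * (M.map Complex.ofReal))) i j).re := by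
    ext i j
    simp only [Matrix.neg_apply, Matrix.add_apply, Matrix.of_apply, Matrix.mul_apply,
      Matrix.transpose_apply, Matrix.conjTranspose_apply, Matrix.map_apply, Complex.neg_re,
      Complex.add_re, Complex.re_sum, Complex.star_def, Complex.conj_ofReal]
    congr 1
    congr 1 <;> exact Finset.sum_congr rfl fun l _ => by simp [Complex.mul_re]
  rw [hmat]
  exact re_posdef hneg

lemma posdef_smul {P : Matrix (Fin k) (Fin k) ℝ} (hP : P.PosDef) {e : ℝ} (he : 0 < e) :
    (e • P).PosDef := by
  refine posdef_real_of ?_ (fun x hx => ?_)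
  · rw [Matrix.transpose_smul]
    congr 1
    ext i j
    rw [Matrix.transpose_apply, symm_entries hP.isHermitian j i]
  · rw [Matrix.smul_mulVec, dotProduct_smul, smul_eq_mul]
    exact mul_pos he (posdef_real_quad hP x hx)

lemma arith2 {c K G U cross g eps : ℝ} (hc : 0 < c) (hK : 0 ≤ K) (hG : 0 < G) (hU : 0 ≤ U)
    (hcross : cross^2 ≤ U*(K*G)) (hg : c*G ≤ g) (heps : eps = c/(K+1)) :
    0 < eps*g + 2*(eps*cross) + 2*U := by
  have heps0 : 0 < eps := by rw [heps]; exact div_pos hc (by linarith)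
  have heq : eps*(K+1) = c := by rw [heps]; field_simp
  have hKeq : eps*K = c - eps := by nlinarith [heq]
  set a := Real.sqrt U with ha
  set b := Real.sqrt (K*G) with hb
  have ha0 : 0 ≤ a := Real.sqrt_nonneg _
  have hb0 : 0 ≤ b := Real.sqrt_nonneg _
  have ha2 : a^2 = U := Real.sq_sqrt hU
  have hb2 : b^2 = K*G := Real.sq_sqrt (by positivity)
  have hcross2 : cross^2 ≤ (a*b)^2 := by rw [mul_pow, ha2, hb2]; exact hcross
  have habcross : -(a*b) ≤ cross := by
    by_contra hlt
    push_neg at hlt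
    have h0 : 0 ≤ a*b := mul_nonneg ha0 hb0
    nlinarith [hcross2]
  have hsq : 2*(eps*(a*b)) ≤ 2*a^2 + (eps*b)^2/2 := by nlinarith [sq_nonneg (2*a - eps*b)]
  have h1 : -(2*U + eps^2*(K*G)/2) ≤ 2*(eps*cross) := by
    have h2 := mul_le_mul_of_nonneg_left habcross (by linarith : (0:ℝ) ≤ 2*eps)
    nlinarith [hsq, ha2, hb2]
  have hKG : eps*(eps*K)*G = eps*(c-eps)*G := by rw [hKeq]
  nlinarith [mul_le_mul_of_nonneg_left hg heps0.le, mul_pos heps0 hG,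
    mul_pos (mul_pos heps0 hc) hG, mul_pos (mul_pos heps0 heps0) hG]

end

end LMIAux

open LMIAux in
/-- There exists a positive definite solution S to AᵀS + SA - 2CᵀC < 0 if and only if
    the pair (A, C) is detectable, i.e. some F makes A + FC Hurwitz. -/
theorem lmi_solvable_iff_detectable (n m : ℕ)
    (A : Matrix (Fin n) (Fin n) ℝ) (C : Matrix (Fin m) (Fin n) ℝ) :
    (∃ S : Matrix (Fin n) (Fin n) ℝ, S.PosDef ∧
        (-(Aᵀ * S + S * A - (2 : ℝ) • (Cᵀ * C))).PosDef) ↔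
      (∃ F : Matrix (Fin n) (Fin m) ℝ,
        ∀ μ : ℂ, (∃ v : Fin n → ℂ, v ≠ 0 ∧
            ((A + F * C).map Complex.ofReal) *ᵥ v = μ • v) → μ.re < 0) := by
  constructor
  · rintro ⟨S, hS, hQpd⟩
    classical
    have hdet : IsUnit S.det := hS.det_pos.ne'.isUnit
    set F : Matrix (Fin n) (Fin m) ℝ := -(S⁻¹ * Cᵀ) with hFdef
    refine ⟨F, ?_⟩
    rintro μ ⟨v, hv0, hvμ⟩
    have hSsymm : Sᵀ = S := by
      ext i j; rw [Matrix.transpose_apply, symm_entries hS.isHermitian j i]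
    have hSinv : (S⁻¹)ᵀ = S⁻¹ := by rw [Matrix.transpose_nonsing_inv, hSsymm]
    have hFC : S * (F * C) = -(Cᵀ * C) := by
      rw [hFdef, Matrix.neg_mul, Matrix.mul_neg, ← Matrix.mul_assoc, ← Matrix.mul_assoc,
        Matrix.mul_nonsing_inv _ hdet, Matrix.one_mul]
    have hCF : (F * C)ᵀ * S = -(Cᵀ * C) := by
      rw [Matrix.transpose_mul, hFdef, Matrix.transpose_neg, Matrix.transpose_mul,
        Matrix.transpose_transpose, hSinv, Matrix.mul_neg, Matrix.neg_mul,
        Matrix.mul_assoc, Matrix.mul_assoc, Matrix.nonsing_inv_mul _ hdet, Matrix.mul_one]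
    have hid : (A + F*C)ᵀ * S + S * (A + F*C) = Aᵀ * S + S * A - (2:ℝ) • (Cᵀ * C) := by
      rw [Matrix.transpose_add, Matrix.add_mul, Matrix.mul_add, hFC, hCF, two_smul]
      abel
    set Q : Matrix (Fin n) (Fin n) ℝ := -(Aᵀ * S + S * A - (2:ℝ) • (Cᵀ * C)) with hQdef
    have hidQ : (A + F*C)ᵀ * S + S * (A + F*C) = -Q := by rw [hid, hQdef, neg_neg]
    set φ := (Complex.ofRealHom.mapMatrix :
      Matrix (Fin n) (Fin n) ℝ →+* Matrix (Fin n) (Fin n) ℂ) with hφdef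
    have hφ : ∀ X : Matrix (Fin n) (Fin n) ℝ, X.map Complex.ofReal = φ X := fun X => rfl
    set Mc := (A + F*C).map Complex.ofReal with hMc
    have hconj : Mcᴴ = ((A + F*C)ᵀ).map Complex.ofReal := by
      ext i j
      rw [Matrix.conjTranspose_apply, hMc]
      simp only [Matrix.map_apply, Matrix.transpose_apply, Complex.star_def,
        Complex.conj_ofReal]
    have hCid : Mcᴴ * (S.map Complex.ofReal) + (S.map Complex.ofReal) * Mc
        = -(Q.map Complex.ofReal) := by
      have h2 := congrArg φ hidQ
      rw [_root_.map_add, _root_.map_mul, _root_.map_mul, _root_.map_neg] at h2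
      rw [hconj]
      exact h2
    have hterm : star v ⬝ᵥ (Mcᴴ * (S.map Complex.ofReal) + (S.map Complex.ofReal) * Mc) *ᵥ v
        = ((starRingEnd ℂ) μ + μ) * (star v ⬝ᵥ (S.map Complex.ofReal) *ᵥ v) := by
      rw [add_mulVec, dotProduct_add]
      have e1 : star v ⬝ᵥ (Mcᴴ * (S.map Complex.ofReal)) *ᵥ v
          = (starRingEnd ℂ) μ * (star v ⬝ᵥ (S.map Complex.ofReal) *ᵥ v) := by
        rw [← mulVec_mulVec, dotProduct_mulVec, ← star_mulVec, hvμ, star_smul,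
          smul_dotProduct]
        rfl
      have e2 : star v ⬝ᵥ ((S.map Complex.ofReal) * Mc) *ᵥ v
          = μ * (star v ⬝ᵥ (S.map Complex.ofReal) *ᵥ v) := by
        rw [← mulVec_mulVec, hvμ, mulVec_smul, dotProduct_smul, smul_eq_mul]
      rw [e1, e2]
      ring
    rw [hCid] at hterm
    open scoped ComplexOrder in have hp := (posdef_map hS).dotProduct_mulVec_pos hv0
    open scoped ComplexOrder in have hq := (posdef_map hQpd).dotProduct_mulVec_pos hv0
    rw [Complex.pos_iff] at hp hq
    have hμconj : (starRingEnd ℂ) μ + μ = ((2*μ.re : ℝ) : ℂ) := by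
      rw [add_comm]; exact Complex.add_conj μ
    rw [hμconj] at hterm
    have hre := congrArg Complex.re hterm
    rw [Matrix.neg_mulVec, dotProduct_neg, Complex.neg_re, Complex.re_ofReal_mul] at hre
    nlinarith [hp.1, hq.1]
  · rintro ⟨F, hF⟩
    classical
    obtain ⟨P, hPpd, hQ0pd⟩ := key_real (A + F * C) hF
    set Q0 : Matrix (Fin n) (Fin n) ℝ := -((A + F*C)ᵀ * P + P * (A + F*C)) with hQ0
    obtain ⟨c, hc, hcoer⟩ := coercive_real hQ0pd
    obtain ⟨K, hK, hKb⟩ := normbd_real (Fᵀ * P)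
    set eps := c / (K+1) with hepsdef
    have heps0 : 0 < eps := div_pos hc (by linarith)
    have hPsymm : Pᵀ = P := by
      ext i j; rw [Matrix.transpose_apply, symm_entries hPpd.isHermitian j i]
    have hA' : Aᵀ * (eps • P) + (eps • P) * A - (2:ℝ) • (Cᵀ * C)
        = (eps • ((A+F*C)ᵀ * P) + eps • (P * (A+F*C)))
          - (eps • ((F*C)ᵀ * P) + eps • (P * (F*C))) - (2:ℝ) • (Cᵀ * C) := by
      have h1 : Aᵀ * (eps • P) = eps • ((A+F*C)ᵀ * P) - eps • ((F*C)ᵀ * P) := by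
        rw [Matrix.mul_smul, Matrix.transpose_add, Matrix.add_mul, smul_add]
        abel
      have h2 : (eps • P) * A = eps • (P * (A+F*C)) - eps • (P * (F*C)) := by
        rw [Matrix.smul_mul, Matrix.mul_add, smul_add]
        abel
      rw [h1, h2]
      abel
    refine ⟨eps • P, posdef_smul hPpd heps0, ?_⟩
    refine posdef_real_of ?_ (fun x hx => ?_)
    · rw [hA']
      simp only [Matrix.transpose_neg, Matrix.transpose_sub, Matrix.transpose_add,
        Matrix.transpose_smul, Matrix.transpose_mul, Matrix.transpose_transpose, hPsymm]
      abel
    · set u := C *ᵥ x with hu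
      set z := (Fᵀ * P) *ᵥ x with hz
      have t1 : x ⬝ᵥ ((F*C)ᵀ * P) *ᵥ x = u ⬝ᵥ z := by
        rw [Matrix.transpose_mul, Matrix.mul_assoc, ← mulVec_mulVec, dotProduct_mulVec,
          Matrix.vecMul_transpose]
      have t2 : x ⬝ᵥ (P * (F*C)) *ᵥ x = u ⬝ᵥ z := by
        rw [← mulVec_mulVec, dotProduct_mulVec]
        rw [show x ᵥ* P = P *ᵥ x by conv_lhs => rw [← hPsymm, Matrix.vecMul_transpose]]
        rw [← mulVec_mulVec, dotProduct_mulVec]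
        rw [show (P *ᵥ x) ᵥ* F = Fᵀ *ᵥ (P *ᵥ x) by
          rw [← Matrix.transpose_transpose F, Matrix.vecMul_transpose,
            Matrix.transpose_transpose]]
        rw [mulVec_mulVec, ← hu, ← hz]
        exact dotProduct_comm _ _
      have t3 : x ⬝ᵥ (Cᵀ * C) *ᵥ x = u ⬝ᵥ u := by
        rw [← mulVec_mulVec, dotProduct_mulVec, Matrix.vecMul_transpose]
      have hQ0x : x ⬝ᵥ Q0 *ᵥ x
          = -(x ⬝ᵥ ((A+F*C)ᵀ * P) *ᵥ x + x ⬝ᵥ (P * (A+F*C)) *ᵥ x) := by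
        rw [hQ0, Matrix.neg_mulVec, dotProduct_neg, Matrix.add_mulVec, dotProduct_add]
      have hval : x ⬝ᵥ (-(Aᵀ * (eps • P) + (eps • P) * A - (2:ℝ) • (Cᵀ * C))) *ᵥ x
          = eps * (x ⬝ᵥ Q0 *ᵥ x) + 2*(eps * (u ⬝ᵥ z)) + 2*(u ⬝ᵥ u) := by
        rw [hA', hQ0x]
        simp only [Matrix.neg_mulVec, Matrix.sub_mulVec, Matrix.add_mulVec,
          dotProduct_neg, dotProduct_sub, dotProduct_add, Matrix.smul_mulVec,
          dotProduct_smul, smul_eq_mul]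
        rw [t1, t2, t3]
        ring
      rw [hval]
      have hG : 0 < x ⬝ᵥ x := by
        rw [← nsq_cv]; exact nsq_pos (cv_ne_zero hx)
      have hU : 0 ≤ u ⬝ᵥ u := by rw [← nsq_cv]; exact nsq_nonneg _
      have hzz : z ⬝ᵥ z ≤ K * (x ⬝ᵥ x) := hKb x
      have hcross : (u ⬝ᵥ z)^2 ≤ (u ⬝ᵥ u) * (K * (x ⬝ᵥ x)) :=
        le_trans (cs_real u z) (mul_le_mul_of_nonneg_left hzz hU)
      exact arith2 hc hK hG hU hcross (hcoer x) hepsdef
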